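/- Let S be the additive submonoid of the natural numbers generated by q³, mq and m(q+1). Then the number of gaps of S, i.e. the cardinality of ℕ \ S, equals g = (q−1)(q^{n+1}+q^n−q²)/2. -/

import Mathlib

theorem mem_closure_triple (a b c x : ℕ) :
    x ∈ AddSubmonoid.closure ({a, b, c} : Set ℕ) ↔
      ∃ i j k : ℕ, x = i * a + j * b + k * c := by
  constructor
  · intro hx
    induction hx using AddSubmonoid.closure_induction with
    | mem y hy =>
      simp only [Set.mem_insert_iff, Set.mem_singleton_iff] at hy
      rcases hy with rfl | rfl | rfl
      · exact ⟨1, 0, 0, by simp⟩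
      · exact ⟨0, 1, 0, by simp⟩
      · exact ⟨0, 0, 1, by simp⟩
    | zero => exact ⟨0, 0, 0, by simp⟩
    | add x y _ _ hx hy =>
      obtain ⟨i1, j1, k1, rfl⟩ := hx
      obtain ⟨i2, j2, k2, rfl⟩ := hy
      exact ⟨i1 + i2, j1 + j2, k1 + k2, by ring⟩
  · rintro ⟨i, j, k, rfl⟩
    have ha : a ∈ AddSubmonoid.closure ({a, b, c} : Set ℕ) :=
      AddSubmonoid.subset_closure (by simp)
    have hb : b ∈ AddSubmonoid.closure ({a, b, c} : Set ℕ) :=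
      AddSubmonoid.subset_closure (by simp)
    have hc : c ∈ AddSubmonoid.closure ({a, b, c} : Set ℕ) :=
      AddSubmonoid.subset_closure (by simp)
    have h1 := (AddSubmonoid.closure _).nsmul_mem ha i
    have h2 := (AddSubmonoid.closure _).nsmul_mem hb j
    have h3 := (AddSubmonoid.closure _).nsmul_mem hc k
    simpa [smul_eq_mul] using add_mem (add_mem h1 h2) h3

theorem reduce_aux (q m : ℕ) (hq : 0 < q) (i j k : ℕ) :
    ∃ a b c : ℕ, b < q^2 ∧ c < q ∧
      i * q^3 + j * (m*q) + k * (m*(q+1)) = a * q^3 + b * (m*q) + c * (m*(q+1)) := by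
  refine ⟨i + m * ((j + (q+1)*(k/q)) / q^2), (j + (q+1)*(k/q)) % q^2, k % q,
    Nat.mod_lt _ (by positivity), Nat.mod_lt _ hq, ?_⟩
  have hk := Nat.div_add_mod k q
  have hB := Nat.div_add_mod (j + (q+1)*(k/q)) (q^2)
  zify at hk hB ⊢
  linear_combination (-(m:ℤ)*((q:ℤ)+1)) * hk + (-(m:ℤ)*(q:ℤ)) * hB

theorem inj_aux (q n m : ℕ) (hq : 2 ≤ q) (hn3 : 3 ≤ n) (hm : m*(q+1) = q^n+1)
    {b1 c1 b2 c2 : ℕ} (hb1 : b1 < q^2) (hc1 : c1 < q) (hb2 : b2 < q^2) (hc2 : c2 < q)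
    (h : (b1*(m*q) + c1*(m*(q+1))) % q^3 = (b2*(m*q) + c2*(m*(q+1))) % q^3) :
    b1 = b2 ∧ c1 = c2 := by
  have hmZ : (m:ℤ) * ((q:ℤ)+1) = (q:ℤ)^n + 1 := by exact_mod_cast hm
  have hd : ((q:ℤ)^3) ∣ ((b2*(m*q) + c2*(m*(q+1)) : ℕ) : ℤ)
      - ((b1*(m*q) + c1*(m*(q+1)) : ℕ) : ℤ) := by
    have := (Nat.modEq_iff_dvd (n := q^3)).mp h
    exact_mod_cast this
  have hqn : ((q:ℤ)^3) ∣ (q:ℤ)^n := pow_dvd_pow _ hn3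
  have cop : IsCoprime ((q:ℤ)+1) ((q:ℤ)^3) :=
    IsCoprime.pow_right (show IsCoprime ((q:ℤ)+1) (q:ℤ) from ⟨1, -1, by ring⟩)
  have hM : ((q:ℤ)^3) ∣ (m:ℤ) - ((q:ℤ)^2 - q + 1) := by
    refine cop.symm.dvd_of_dvd_mul_left ?_
    have : ((q:ℤ)+1) * ((m:ℤ) - ((q:ℤ)^2 - q + 1)) = (q:ℤ)^n - (q:ℤ)^3 := by
      linear_combination hmZ
    rw [this]
    exact dvd_sub hqn dvd_rfl
  have hu : ((q:ℤ)^3) ∣ ((m:ℤ)*q) - ((q:ℤ) - (q:ℤ)^2) := by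
    obtain ⟨t, ht⟩ := hM
    exact ⟨q*t + 1, by linear_combination (q:ℤ) * ht⟩
  have hv : ((q:ℤ)^3) ∣ ((m:ℤ)*((q:ℤ)+1)) - 1 := by
    rw [hmZ]; simpa using hqn
  have hd2 : ((q:ℤ)^3) ∣ ((b2:ℤ)-b1)*((q:ℤ) - (q:ℤ)^2) + ((c2:ℤ)-c1) := by
    have h3 := dvd_sub (dvd_sub hd (hu.mul_left ((b2:ℤ)-b1))) (hv.mul_left ((c2:ℤ)-c1))
    convert h3 using 1
    · rfl
    push_cast
    ring
  have hqc : (q:ℤ) ∣ ((c2:ℤ)-c1) := by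
    have h1 : (q:ℤ) ∣ ((b2:ℤ)-b1)*((q:ℤ) - (q:ℤ)^2) + ((c2:ℤ)-c1) :=
      dvd_trans ⟨(q:ℤ)^2, by ring⟩ hd2
    have h2 : (q:ℤ) ∣ ((b2:ℤ)-b1)*((q:ℤ) - (q:ℤ)^2) := ⟨((b2:ℤ)-b1)*(1-q), by ring⟩
    have h3 := dvd_sub h1 h2
    convert h3 using 1
    · rfl
    ring
  have hcc : c1 = c2 := by
    have := Int.eq_zero_of_dvd_of_natAbs_lt_natAbs hqc (by omega)
    omega
  subst hcc
  have hd3 : ((q:ℤ)^2) ∣ ((b2:ℤ)-b1)*(1 - (q:ℤ)) := by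
    have h4 : ((q:ℤ)^3) ∣ (q:ℤ) * (((b2:ℤ)-b1)*(1 - (q:ℤ))) := by
      convert hd2 using 1
      ring
    have hq0 : (q:ℤ) ≠ 0 := by positivity
    rcases h4 with ⟨t, ht⟩
    refine ⟨t, ?_⟩
    have : (q:ℤ) * (((b2:ℤ)-b1)*(1 - (q:ℤ))) = (q:ℤ) * ((q:ℤ)^2 * t) := by
      rw [ht]; ring
    exact mul_left_cancel₀ hq0 this
  have cop2 : IsCoprime ((q:ℤ)^2) (1 - (q:ℤ)) :=
    IsCoprime.pow_left (show IsCoprime (q:ℤ) (1-(q:ℤ)) from ⟨1, 1, by ring⟩)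
  have hqb : ((q:ℤ)^2) ∣ ((b2:ℤ)-b1) := cop2.dvd_of_dvd_mul_right hd3
  have := Int.eq_zero_of_dvd_of_natAbs_lt_natAbs hqb (by simp only [← Nat.cast_pow]; omega)
  constructor
  · omega
  · rfl


/-- The number of gaps of the numerical semigroup `S = ⟨q³, mq, m(q+1)⟩` equals
`g = (q-1)(q^(n+1)+qⁿ-q²)/2`. -/
theorem number_of_gaps (q n : ℕ) (hq : IsPrimePow q) (hn : Odd n) (hn1 : 1 < n)
    (m : ℕ) (hm : m * (q + 1) = q ^ n + 1)
    (g : ℤ)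
    (hg : 2 * g = ((q : ℤ) - 1) * ((q : ℤ) ^ (n + 1) + (q : ℤ) ^ n - (q : ℤ) ^ 2)) :
    (({x : ℕ | x ∉ AddSubmonoid.closure ({q ^ 3, m * q, m * (q + 1)} : Set ℕ)}).ncard : ℤ)
      = g := by
  have hq2 : 2 ≤ q := hq.two_le
  have hn3 : 3 ≤ n := by obtain ⟨k, hk⟩ := hn; omega
  have hN0 : 0 < q^3 := by positivity
  set S := AddSubmonoid.closure ({q ^ 3, m * q, m * (q + 1)} : Set ℕ) with hS
  have hmemS : ∀ x : ℕ, x ∈ S ↔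
      ∃ a b c : ℕ, b < q^2 ∧ c < q ∧ x = a*q^3 + b*(m*q) + c*(m*(q+1)) := by
    intro x
    rw [hS, mem_closure_triple]
    constructor
    · rintro ⟨i, j, k, rfl⟩
      obtain ⟨a, b, c, h1, h2, h3⟩ := reduce_aux q m (by omega) i j k
      exact ⟨a, b, c, h1, h2, h3⟩
    · rintro ⟨a, b, c, _, _, rfl⟩
      exact ⟨a, b, c, rfl⟩
  set w : ℕ × ℕ → ℕ := fun p => p.1*(m*q) + p.2*(m*(q+1)) with hw
  set F : Finset (ℕ×ℕ) := Finset.range (q^2) ×ˢ Finset.range q with hF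
  have hmemF : ∀ p : ℕ×ℕ, p ∈ F ↔ p.1 < q^2 ∧ p.2 < q := by
    intro p; simp [hF, Finset.mem_product]
  have hinj : ∀ p ∈ F, ∀ p' ∈ F, w p % q^3 = w p' % q^3 → p = p' := by
    intro p hp p' hp' h
    rw [hmemF] at hp hp'
    obtain ⟨h1, h2⟩ := inj_aux q n m hq2 hn3 hm hp.1 hp.2 hp'.1 hp'.2 h
    exact Prod.ext h1 h2
  have himg : F.image (fun p => w p % q^3) = Finset.range (q^3) := by
    apply Finset.eq_of_subset_of_card_le
    · intro r hr
      simp only [Finset.mem_image] at hr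
      obtain ⟨p, hp, rfl⟩ := hr
      exact Finset.mem_range.mpr (Nat.mod_lt _ hN0)
    · rw [Finset.card_range, Finset.card_image_of_injOn
        (fun p hp p' hp' h => hinj p (by simpa using hp) p' (by simpa using hp') h)]
      rw [hF, Finset.card_product, Finset.card_range, Finset.card_range]
      exact le_of_eq (pow_succ q 2)
  have hsurj : ∀ x : ℕ, ∃ p ∈ F, w p % q^3 = x % q^3 := by
    intro x
    have hx : x % q^3 ∈ Finset.range (q^3) := Finset.mem_range.mpr (Nat.mod_lt _ hN0)
    rw [← himg] at hx
    simpa using hx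
  have hkey : ∀ x : ℕ, ∀ p ∈ F, w p % q^3 = x % q^3 → (x ∈ S ↔ w p ≤ x) := by
    intro x p hp hr
    constructor
    · intro hx
      obtain ⟨a, b, c, hb, hc, rfl⟩ := (hmemS x).mp hx
      have hr' : w (b,c) % q^3 = (a*q^3 + b*(m*q) + c*(m*(q+1))) % q^3 := by
        have : a*q^3 + b*(m*q) + c*(m*(q+1))
            = (b*(m*q) + c*(m*(q+1))) + a*q^3 := by ring
        rw [this, Nat.add_mul_mod_self_right, hw]
      have hpe : p = (b,c) := hinj p hp (b,c) ((hmemF _).mpr ⟨hb, hc⟩) (by rw [hr, hr'])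
      rw [hpe]
      simp only [hw]
      omega
    · intro hle
      have hdvd : q^3 ∣ x - w p := (Nat.modEq_iff_dvd' hle).mp hr
      obtain ⟨t, ht⟩ := hdvd
      apply (hmemS x).mpr
      rw [hmemF] at hp
      refine ⟨t, p.1, p.2, hp.1, hp.2, ?_⟩
      simp only [hw] at ht hle
      have h5 : t * q^3 = q^3 * t := mul_comm _ _
      omega
  set F' : Finset ℕ :=
    F.biUnion (fun p => (Finset.range (w p / q^3)).image (fun k => w p % q^3 + k*q^3))
    with hF'
  have hxmod : ∀ (p : ℕ×ℕ) (k : ℕ), (w p % q^3 + k*q^3) % q^3 = w p % q^3 := by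
    intro p k
    rw [Nat.add_mul_mod_self_right, Nat.mod_mod_of_dvd _ dvd_rfl]
  have hmemF' : ∀ x, x ∈ F' ↔ ∃ p ∈ F, x % q^3 = w p % q^3 ∧ x < w p := by
    intro x
    simp only [hF', Finset.mem_biUnion, Finset.mem_image, Finset.mem_range]
    constructor
    · rintro ⟨p, hp, k, hk, rfl⟩
      refine ⟨p, hp, hxmod p k, ?_⟩
      have h2 := Nat.mod_add_div (w p) (q^3)
      have h3 : k * q^3 < (w p / q^3) * q^3 := by
        exact Nat.mul_lt_mul_of_lt_of_le hk (le_refl _) hN0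
      have h4 : (w p / q^3) * q^3 = q^3 * (w p / q^3) := mul_comm _ _
      omega
    · rintro ⟨p, hp, hr, hlt⟩
      refine ⟨p, hp, x / q^3, ?_, ?_⟩
      · by_contra hcon
        push_neg at hcon
        have h3 := Nat.mul_le_mul_left (q^3) hcon
        have h1 := Nat.mod_add_div x (q^3)
        have h2 := Nat.mod_add_div (w p) (q^3)
        omega
      · have h1 := Nat.mod_add_div x (q^3)
        have h4 : (x/q^3) * q^3 = q^3 * (x/q^3) := mul_comm _ _
        omega
  have hset : {x : ℕ | x ∉ S} = (↑F' : Set ℕ) := by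
    ext x
    simp only [Set.mem_setOf_eq, Finset.mem_coe]
    rw [hmemF']
    constructor
    · intro hx
      obtain ⟨p, hp, hr⟩ := hsurj x
      refine ⟨p, hp, hr.symm, ?_⟩
      by_contra h
      push_neg at h
      exact hx ((hkey x p hp hr).mpr h)
    · rintro ⟨p, hp, hr, hlt⟩ hxS
      exact absurd ((hkey x p hp hr.symm).mp hxS) (by omega)
  have hdisj : ∀ p ∈ F, ∀ p' ∈ F, p ≠ p' →
      Disjoint ((Finset.range (w p / q^3)).image (fun k => w p % q^3 + k*q^3))
        ((Finset.range (w p' / q^3)).image (fun k => w p' % q^3 + k*q^3)) := by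
    intro p hp p' hp' hne
    rw [Finset.disjoint_left]
    rintro x hx hx'
    simp only [Finset.mem_image, Finset.mem_range] at hx hx'
    obtain ⟨k, _, rfl⟩ := hx
    obtain ⟨k', _, he⟩ := hx'
    refine hne (hinj p hp p' hp' ?_)
    rw [← hxmod p k, ← he, hxmod p' k']
  have hcard : F'.card = ∑ p ∈ F, w p / q^3 := by
    rw [hF', Finset.card_biUnion hdisj]
    refine Finset.sum_congr rfl (fun p _ => ?_)
    rw [Finset.card_image_of_injective _ (fun a b h => by
      have : a * q^3 = b * q^3 := by omega
      exact Nat.eq_of_mul_eq_mul_right hN0 this), Finset.card_range]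
  -- arithmetic
  set T : ℕ := ∑ p ∈ F, w p / q^3 with hT
  have hresid : ∑ p ∈ F, (w p % q^3) = ∑ j ∈ Finset.range (q^3), j := by
    have h7 := Finset.sum_image (s := F) (f := fun x => x)
      (g := fun p => w p % q^3) (fun p hp p' hp' h => hinj p hp p' hp' h)
    rw [himg] at h7
    exact h7.symm
  have htot : q^3 * T + ∑ p ∈ F, (w p % q^3) = ∑ p ∈ F, w p := by
    rw [hT, Finset.mul_sum, ← Finset.sum_add_distrib]
    exact Finset.sum_congr rfl (fun p _ => Nat.div_add_mod _ _)
  set G1 : ℕ := ∑ b ∈ Finset.range (q^2), b with hG1d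
  set G2 : ℕ := ∑ c ∈ Finset.range q, c with hG2d
  have e1 : ∑ p ∈ F, p.1 = q * G1 := by
    rw [hF, Finset.sum_product]
    simp [Finset.sum_const, mul_comm, Finset.mul_sum, hG1d]
  have e2 : ∑ p ∈ F, p.2 = q^2 * G2 := by
    rw [hF, Finset.sum_product]
    simp [Finset.sum_const, hG2d]
  have hsumw : ∑ p ∈ F, w p = (q*G1)*(m*q) + (q^2*G2)*(m*(q+1)) := by
    simp only [hw]
    rw [Finset.sum_add_distrib, ← Finset.sum_mul, ← Finset.sum_mul, e1, e2]
  have hG1 := Finset.sum_range_id_mul_two (q^2)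
  have hG2 := Finset.sum_range_id_mul_two q
  have hgauss := Finset.sum_range_id_mul_two (q^3)
  rw [← hG1d] at hG1
  rw [← hG2d] at hG2
  have hW2 : (∑ p ∈ F, w p)*2 = q*(q^2*(q^2-1))*(m*q) + q^2*(q*(q-1))*(m*(q+1)) := by
    have h6 : ((q*G1)*(m*q) + (q^2*G2)*(m*(q+1)))*2
        = q*(G1*2)*(m*q) + q^2*(G2*2)*(m*(q+1)) := by ring
    rw [hsumw, h6, hG1, hG2]
  have E : 2*(q^3*T) + q^3*(q^3-1) = q*(q^2*(q^2-1))*(m*q) + q^2*(q*(q-1))*(m*(q+1)) := by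
    rw [← hW2, ← hgauss]
    omega
  have hq1 : (1:ℕ) ≤ q := by omega
  have hq21 : (1:ℕ) ≤ q^2 := Nat.one_le_pow _ _ (by omega)
  have hq31 : (1:ℕ) ≤ q^3 := Nat.one_le_pow _ _ (by omega)
  zify [hq1, hq21, hq31] at E
  have hmZ : (m:ℤ) * ((q:ℤ)+1) = (q:ℤ)^n + 1 := by exact_mod_cast hm
  rw [hset, Set.ncard_coe_finset, hcard]
  have hfin : (2*(q:ℤ)^3) * T = (2*(q:ℤ)^3) * g := by
    linear_combination E + ((q:ℤ)^4+(q:ℤ)^3)*((q:ℤ)-1)*hmZ - (q:ℤ)^3*hg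
  have h2q3 : (2*(q:ℤ)^3) ≠ 0 := by positivity
  exact mul_left_cancel₀ h2q3 hfin
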